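/- Let W = W₁ × W₂ be a finite Coxeter group with S = S₁ ⊔ S₂. There is a unique ring homomorphism τ : Ω(W,S) → Ω(W₁,S₁) ⊗_ℤ Ω(W₂,S₂) with τ(e_s) = e_s ⊗ 1 and τ(x_s) = x_s ⊗ 1 for s ∈ S₁, and τ(e_s) = 1 ⊗ e_s and τ(x_s) = 1 ⊗ x_s for s ∈ S₂. -/

import Mathlib

open scoped TensorProduct

noncomputable section

namespace WGraphPaper

variable (k : Type*) [CommRing k] {B B₁ B₂ : Type*}

/-! ### Gyoja's W-graph algebra with coefficients in `k`
(`Omega ℤ M` is the W-graph algebra `Ω(W,S)` itself, `Omega k M` is `kΩ`). -/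

/-- The free ring `k⟨e_b, x_b | b ∈ B⟩`; `Sum.inl b` encodes the generator `e_b` and
`Sum.inr b` encodes the generator `x_b`. -/
abbrev FreeGen (B : Type*) := FreeAlgebra k (B ⊕ B)

def eGen (b : B) : FreeGen k B := FreeAlgebra.ι k (Sum.inl b)
def xGen (b : B) : FreeGen k B := FreeAlgebra.ι k (Sum.inr b)

/-- `altProd a b n` is the alternating product `a * b * a * ⋯` with `n` factors. -/
def altProd {A : Type*} [Monoid A] : A → A → ℕ → A
  | _, _, 0 => 1
  | a, b, n + 1 => a * altProd b a n

/-- The braid commutator `Δ_m(a,b) = (a b a ⋯) - (b a b ⋯)` (`m` factors each). -/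
def braidComm {A : Type*} [Ring A] (m : ℕ) (a b : A) : A := altProd a b m - altProd b a m

/-- `ι(T_b) = -v⁻¹ e_b + v (1 - e_b) + x_b`, an element of `(FreeGen k B)[v,v⁻¹]`. -/
def iotaT (b : B) : LaurentPolynomial (FreeGen k B) :=
  LaurentPolynomial.C (-(eGen k b)) * LaurentPolynomial.T (-1)
    + LaurentPolynomial.C (1 - eGen k b) * LaurentPolynomial.T 1
    + LaurentPolynomial.C (xGen k b)

/-- The coefficient of `v^n` in a Laurent polynomial. -/
def lcoeff {R : Type*} [Semiring R] (p : LaurentPolynomial R) (n : ℤ) : R :=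
  p.coeff n

/-- The defining relations of Gyoja's W-graph algebra: the relations (a) and (b) together
with the vanishing of all Laurent coefficients `y^γ(s,t)` of the braid commutators
`Δ_{m_{st}}(ι(T_s), ι(T_t))` (for `m_{st} < ∞`, i.e. `M s t ≠ 0`). -/
inductive OmegaRel (M : CoxeterMatrix B) : FreeGen k B → FreeGen k B → Prop
  | e_idem (b : B) : OmegaRel M (eGen k b * eGen k b) (eGen k b)
  | e_comm (b b' : B) : OmegaRel M (eGen k b * eGen k b') (eGen k b' * eGen k b)
  | ex (b : B) : OmegaRel M (eGen k b * xGen k b) (xGen k b)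
  | xe (b : B) : OmegaRel M (xGen k b * eGen k b) 0
  | braid (b b' : B) (h : M b b' ≠ 0) (γ : ℤ) :
      OmegaRel M (lcoeff (braidComm (M b b') (iotaT k b) (iotaT k b')) γ) 0

/-- Gyoja's W-graph algebra `Ω(W,S)` (for `k = ℤ`), resp. `kΩ(W,S)`, defined from
the Coxeter matrix of `(W,S)`. -/
abbrev Omega (M : CoxeterMatrix B) := RingQuot (OmegaRel k M)

/-- The image of the generator `e_b` in `Ω`. -/
def eOm (M : CoxeterMatrix B) (b : B) : Omega k M :=
  RingQuot.mkRingHom (OmegaRel k M) (eGen k b)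

/-- The image of the generator `x_b` in `Ω`. -/
def xOm (M : CoxeterMatrix B) (b : B) : Omega k M :=
  RingQuot.mkRingHom (OmegaRel k M) (xGen k b)

lemma commute_eOm (M : CoxeterMatrix B) (b b' : B) : Commute (eOm k M b) (eOm k M b') := by
  show _ = _
  rw [eOm, eOm, ← map_mul, ← map_mul]
  exact RingQuot.mkRingHom_rel (OmegaRel.e_comm b b')

lemma commute_oneSubEOm (M : CoxeterMatrix B) (b b' : B) :
    Commute (1 - eOm k M b) (1 - eOm k M b') :=
  (Commute.one_left _).sub_left ((Commute.one_right _).sub_right (commute_eOm k M b b'))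

variable [Fintype B] [DecidableEq B] [DecidableEq B₁] [DecidableEq B₂]

/-- The idempotent `E_I = (∏_{t ∈ I} e_t) (∏_{t ∈ S∖I} (1 - e_t))`. -/
def EOm (M : CoxeterMatrix B) (I : Finset B) : Omega k M :=
  (I.noncommProd (fun b => eOm k M b) (fun _ _ _ _ _ => commute_eOm k M _ _)) *
    ((Iᶜ).noncommProd (fun b => 1 - eOm k M b) (fun _ _ _ _ _ => commute_oneSubEOm k M _ _))

/-- The edge element `X_{IJ}^s = E_I x_s E_J`. -/
def XOm (M : CoxeterMatrix B) (I J : Finset B) (s : B) : Omega k M :=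
  EOm k M I * xOm k M s * EOm k M J

/-- `I ← J` is an edge of the compatibility graph `Q_W`: `I ∖ J ≠ ∅` and no element of
`I ∖ J` commutes (in `W`, i.e. `m_{st} = 2`) with an element of `J ∖ I`. -/
def QEdge (M : CoxeterMatrix B) (I J : Finset B) : Prop :=
  (I \ J).Nonempty ∧ ∀ s ∈ I \ J, ∀ t ∈ J \ I, M s t ≠ 2

/-- `I ⇆ J`: `I` and `J` are joined by a pair of transversal edges of `Q_W`. -/
def Transversal (M : CoxeterMatrix B) (I J : Finset B) : Prop :=
  QEdge M I J ∧ (J \ I).Nonempty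

/-- The generators of the subalgebra `Ψ(W,S)`: all `E_I` and all transversal edge
elements `X_{IJ}`. -/
def psiGens (M : CoxeterMatrix B) : Set (Omega k M) :=
  {a | ∃ I : Finset B, a = EOm k M I} ∪
    {a | ∃ I J : Finset B, ∃ s : B, Transversal M I J ∧ s ∈ I \ J ∧ a = XOm k M I J s}

/-- The subring `Ψ(W,S) ⊆ Ω(W,S)` generated by all `E_I` and all transversal edges. -/
def Psi (M : CoxeterMatrix B) : Subring (Omega k M) := Subring.closure (psiGens k M)

/-- The subalgebra `kΨ(W,S) ⊆ kΩ(W,S)` generated by all `E_I` and all transversal edges. -/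
def PsiAlg (M : CoxeterMatrix B) : Subalgebra k (Omega k M) :=
  Algebra.adjoin k (psiGens k M)

/-! ### Products of Coxeter systems -/

/-- The Coxeter matrix of the product `W₁ × W₂`, on `S = S₁ ⊔ S₂` (each element of `S₁`
commutes with each element of `S₂`). -/
def prodMatrix (M₁ : CoxeterMatrix B₁) (M₂ : CoxeterMatrix B₂) : CoxeterMatrix (B₁ ⊕ B₂) where
  M i j :=
    match i, j with
    | Sum.inl a, Sum.inl b => M₁ a b
    | Sum.inr a, Sum.inr b => M₂ a b
    | _, _ => 2
  isSymm := by
    unfold Matrix.IsSymm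
    ext i j
    rcases i with a | a <;> rcases j with b | b <;>
      simp only [Matrix.transpose_apply] <;>
      first
        | exact M₁.symmetric b a
        | exact M₂.symmetric b a
        | rfl
  diagonal i := by rcases i with a | a <;> simp [CoxeterMatrix.diagonal]
  off_diagonal i j h := by
    rcases i with a | a <;> rcases j with b | b
    · exact M₁.off_diagonal a b (by rintro rfl; exact h rfl)
    · simp
    · simp
    · exact M₂.off_diagonal a b (by rintro rfl; exact h rfl)

def inlEmb : B₁ ↪ B₁ ⊕ B₂ := ⟨Sum.inl, Sum.inl_injective⟩
def inrEmb : B₂ ↪ B₁ ⊕ B₂ := ⟨Sum.inr, Sum.inr_injective⟩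

/-- The subset `I ⊔ K` of `S = S₁ ⊔ S₂`, for `I ⊆ S₁` and `K ⊆ S₂`. -/
def fjoin (I : Finset B₁) (K : Finset B₂) : Finset (B₁ ⊕ B₂) :=
  I.map inlEmb ∪ K.map inrEmb

/-- The part `I₁ = I ∩ S₁` of a subset `I ⊆ S = S₁ ⊔ S₂`. -/
def part1 (I : Finset (B₁ ⊕ B₂)) : Finset B₁ :=
  I.preimage Sum.inl Sum.inl_injective.injOn

/-- The part `I₂ = I ∩ S₂` of a subset `I ⊆ S = S₁ ⊔ S₂`. -/
def part2 (I : Finset (B₁ ⊕ B₂)) : Finset B₂ :=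
  I.preimage Sum.inr Sum.inr_injective.injOn

variable (M₁ : CoxeterMatrix B₁) (M₂ : CoxeterMatrix B₂)

/-- `f` is the parabolic morphism `ι₁ : Ω₁ → Ω` (it sends `e_s ↦ e_s`, `x_s ↦ x_s`
for `s ∈ S₁`). -/
def Parab1Cond (f : Omega k M₁ → Omega k (prodMatrix M₁ M₂)) : Prop :=
  ∀ b : B₁, f (eOm k M₁ b) = eOm k (prodMatrix M₁ M₂) (Sum.inl b) ∧
    f (xOm k M₁ b) = xOm k (prodMatrix M₁ M₂) (Sum.inl b)

/-- `f` is the parabolic morphism `ι₂ : Ω₂ → Ω` (it sends `e_s ↦ e_s`, `x_s ↦ x_s`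
for `s ∈ S₂`). -/
def Parab2Cond (f : Omega k M₂ → Omega k (prodMatrix M₁ M₂)) : Prop :=
  ∀ b : B₂, f (eOm k M₂ b) = eOm k (prodMatrix M₁ M₂) (Sum.inr b) ∧
    f (xOm k M₂ b) = xOm k (prodMatrix M₁ M₂) (Sum.inr b)

/-- `t` is the morphism `τ : Ω → Ω₁ ⊗ Ω₂` of the paper: it sends `e_s ↦ e_s ⊗ 1`,
`x_s ↦ x_s ⊗ 1` for `s ∈ S₁` and `e_s ↦ 1 ⊗ e_s`, `x_s ↦ 1 ⊗ x_s` for `s ∈ S₂`. -/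
def TauCond (t : Omega k (prodMatrix M₁ M₂) → Omega k M₁ ⊗[k] Omega k M₂) : Prop :=
  (∀ b : B₁, t (eOm k (prodMatrix M₁ M₂) (Sum.inl b)) = eOm k M₁ b ⊗ₜ[k] 1 ∧
      t (xOm k (prodMatrix M₁ M₂) (Sum.inl b)) = xOm k M₁ b ⊗ₜ[k] 1) ∧
  (∀ b : B₂, t (eOm k (prodMatrix M₁ M₂) (Sum.inr b)) = 1 ⊗ₜ[k] eOm k M₂ b ∧
      t (xOm k (prodMatrix M₁ M₂) (Sum.inr b)) = 1 ⊗ₜ[k] xOm k M₂ b)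



/-- The coefficientwise extension of a ring homomorphism to Laurent polynomial rings. -/
def laurentMap {R A : Type*} [Semiring R] [Semiring A] (f : R →+* A) :
    LaurentPolynomial R →+* LaurentPolynomial A :=
  AddMonoidAlgebra.liftNCRingHom (LaurentPolynomial.C.comp f)
    { toFun := fun n => LaurentPolynomial.T (Multiplicative.toAdd n)
      map_one' := LaurentPolynomial.T_zero
      map_mul' := fun _ _ => LaurentPolynomial.T_add _ _ }
    (fun _ n => (LaurentPolynomial.commute_T (Multiplicative.toAdd n) _).symm)

/-- `k` is a good ring for `(W,S)`: it contains `2cos(2π/m_{st})` for all `s,t ∈ S`. -/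
def GoodRing (M : CoxeterMatrix B) (k : Subring ℂ) : Prop :=
  ∀ i j : B, M i j ≠ 0 → (2 * Complex.cos (2 * Real.pi / (M i j : ℂ))) ∈ k

/-- The irreducible complex characters of a finite group `G`. -/
def IrrChar (G : Type) [Group G] : Type :=
  {χ : G → ℂ // ∃ V : FDRep ℂ G, CategoryTheory.Simple V ∧ χ = FDRep.character V}

/-- The degree `d_λ` of an irreducible character `λ` (its value at `1`). -/
def IrrChar.degree {G : Type} [Group G] (χ : IrrChar G) : ℕ := ⌊(χ.val 1).re⌋₊

variable {ι : Type*}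

/-- (Z1): the `F^λ` are a decomposition of the identity into orthogonal idempotents. -/
def Z1 {A : Type*} [Ring A] (F : ι → A) : Prop :=
  (∀ l, F l * F l = F l) ∧ (∀ l m, l ≠ m → F l * F m = 0) ∧ ∑ᶠ l, F l = 1

variable [Fintype B] [DecidableEq B]

/-- (Z2): the decomposition is compatible with the one coming from the path-algebra
structure: `E_I F^λ = F^λ E_I`. -/
def Z2 (M : CoxeterMatrix B) (F : ι → Omega k M) : Prop :=
  ∀ l (I : Finset B), EOm k M I * F l = F l * EOm k M I

/-- (Z3), with a specified partial order `le`: only "downward edges" exist,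
i.e. `F^λ Ω F^μ ≠ 0 → λ ⪯ μ`. -/
def Z3At {A : Type*} [Ring A] (F : ι → A) (le : ι → ι → Prop) : Prop :=
  ∀ l m, (∃ a : A, F l * a * F m ≠ 0) → le l m

/-- (Z3): there is a partial order on `Irr(W)` such that only "downward edges" exist. -/
def Z3 {A : Type*} [Ring A] (F : ι → A) : Prop :=
  ∃ le : ι → ι → Prop, IsPartialOrder ι le ∧ Z3At F le

/-- (Z4): there are surjective `k`-algebra morphisms `k^{d_λ×d_λ} ↠ F^λ kΩ F^λ`. -/
def Z4 (M : CoxeterMatrix B) (F : ι → Omega k M) (d : ι → ℕ) : Prop :=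
  ∀ l, ∃ ψ : Matrix (Fin (d l)) (Fin (d l)) k →ₗ[k] Omega k M,
    (∀ x y, ψ (x * y) = ψ x * ψ y) ∧ ψ 1 = F l ∧
      Set.range ψ = {z | ∃ a : Omega k M, z = F l * a * F l}

/-- (Z5): `F^λ X_{IJ} F^λ ∈ kΨ(W,S)` for all edges `I ← J` of `Q_W`. -/
def Z5 (M : CoxeterMatrix B) (F : ι → Omega k M) : Prop :=
  ∀ l (I J : Finset B) (s : B), QEdge M I J → s ∈ I \ J →
    F l * XOm k M I J s * F l ∈ PsiAlg k M

/-- (Z6): `F^λ ∈ kΨ(W,S)`. -/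
def Z6 (M : CoxeterMatrix B) (F : ι → Omega k M) : Prop :=
  ∀ l, F l ∈ PsiAlg k M

/-- The family satisfies all of (Z1)–(Z6), i.e. the strong W-graph decomposition
conjecture holds via this family (`d` is the degree function on `Irr(W)`). -/
def StrongZ (M : CoxeterMatrix B) (F : ι → Omega k M) (d : ι → ℕ) : Prop :=
  Z1 F ∧ Z2 k M F ∧ Z3 F ∧ Z4 k M F d ∧ Z5 k M F ∧ Z6 k M F

/-- The maximal length (number of steps) of a strict chain for the relation `le`. -/
def orderHeight (le : ι → ι → Prop) : ℕ :=
  sSup {n | ∃ c : Fin (n + 1) → ι, Function.Injective c ∧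
    ∀ i j : Fin (n + 1), i < j → le (c i) (c j)}





/-! ### Auxiliary lemmas for Statement 5 -/

section Aux5

open LaurentPolynomial

variable {R A : Type*} [Semiring R] [Semiring A]

lemma laurentMap_single (f : R →+* A) (n : ℤ) (a : R) :
    laurentMap f (AddMonoidAlgebra.single n a : LaurentPolynomial R) = AddMonoidAlgebra.single n (f a) := by
  show AddMonoidAlgebra.liftNC _ _ _ = _
  rw [AddMonoidAlgebra.liftNC_single, single_eq_C_mul_T]
  rfl

lemma laurentMap_C (f : R →+* A) (a : R) :
    laurentMap f (LaurentPolynomial.C a) = LaurentPolynomial.C (f a) := by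
  have h : (LaurentPolynomial.C a : LaurentPolynomial R) = AddMonoidAlgebra.single 0 a := by
    rw [single_eq_C_mul_T, T_zero, mul_one]
  have h' : (LaurentPolynomial.C (f a) : LaurentPolynomial A) = AddMonoidAlgebra.single 0 (f a) := by
    rw [single_eq_C_mul_T, T_zero, mul_one]
  rw [h, laurentMap_single, h']

lemma laurentMap_T (f : R →+* A) (n : ℤ) :
    laurentMap f (LaurentPolynomial.T n : LaurentPolynomial R) = LaurentPolynomial.T n := by
  have h : (LaurentPolynomial.T n : LaurentPolynomial R) = AddMonoidAlgebra.single n 1 := rfl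
  have h' : (LaurentPolynomial.T n : LaurentPolynomial A) = AddMonoidAlgebra.single n 1 := rfl
  rw [h, laurentMap_single, map_one, h']

lemma lcoeff_zero (γ : ℤ) : lcoeff (0 : LaurentPolynomial R) γ = 0 := rfl

lemma lcoeff_add (p q : LaurentPolynomial R) (γ : ℤ) :
    lcoeff (p + q) γ = lcoeff p γ + lcoeff q γ := rfl

lemma lcoeff_single (n : ℤ) (a : R) (γ : ℤ) :
    lcoeff (AddMonoidAlgebra.single n a : LaurentPolynomial R) γ = if n = γ then a else 0 :=
  Finsupp.single_apply

lemma lcoeff_laurentMap (f : R →+* A) (p : LaurentPolynomial R) (γ : ℤ) :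
    lcoeff (laurentMap f p) γ = f (lcoeff p γ) := by
  induction p using AddMonoidAlgebra.induction_linear with
  | zero => rw [map_zero, lcoeff_zero, lcoeff_zero, map_zero]
  | add p q hp hq => rw [map_add, lcoeff_add, lcoeff_add, hp, hq, map_add]
  | single n a =>
      rw [laurentMap_single, lcoeff_single, lcoeff_single]
      split <;> simp

end Aux5

section Aux5b

open LaurentPolynomial

variable {A : Type*} [Ring A]

/-- The generic form of `ι(T)` over any ring. -/
def iotaTau (a x : A) : LaurentPolynomial A :=
  LaurentPolynomial.C (-a) * LaurentPolynomial.T (-1)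
    + LaurentPolynomial.C (1 - a) * LaurentPolynomial.T 1
    + LaurentPolynomial.C x

lemma iotaT_eq_iotaTau (k : Type*) [CommRing k] {B : Type*} (b : B) :
    iotaT k b = iotaTau (eGen k b) (xGen k b) := rfl

lemma C_mul_T_mul_C_mul_T (a c : A) (n m : ℤ) :
    (LaurentPolynomial.C a * LaurentPolynomial.T n) * (LaurentPolynomial.C c * LaurentPolynomial.T m)
      = LaurentPolynomial.C (a * c) * LaurentPolynomial.T (n + m) := by
  rw [mul_assoc, LaurentPolynomial.T_mul, ← mul_assoc, ← mul_assoc, ← map_mul,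
    LaurentPolynomial.mul_T_assoc, add_comm m n]

lemma commute_C_mul_T {a c : A} (h : Commute a c) (n m : ℤ) :
    Commute (LaurentPolynomial.C a * LaurentPolynomial.T n)
      (LaurentPolynomial.C c * LaurentPolynomial.T m) := by
  show _ = _
  rw [C_mul_T_mul_C_mul_T, C_mul_T_mul_C_mul_T, h.eq, add_comm]

lemma commute_iotaTau {a x c z : A} (hac : Commute a c) (haz : Commute a z)
    (hxc : Commute x c) (hxz : Commute x z) : Commute (iotaTau a x) (iotaTau c z) := by
  have hx : (LaurentPolynomial.C x : LaurentPolynomial A)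
      = LaurentPolynomial.C x * LaurentPolynomial.T 0 := by rw [T_zero, mul_one]
  have hz : (LaurentPolynomial.C z : LaurentPolynomial A)
      = LaurentPolynomial.C z * LaurentPolynomial.T 0 := by rw [T_zero, mul_one]
  have h1c : Commute (1 - a) c := (Commute.one_left c).sub_left hac
  have h1z : Commute (1 - a) z := (Commute.one_left z).sub_left haz
  have hc1 : Commute a (1 - c) := (Commute.one_right a).sub_right hac
  have hx1 : Commute x (1 - c) := (Commute.one_right x).sub_right hxc
  have h11 : Commute (1 - a) (1 - c) := (Commute.one_right _).sub_right h1c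
  rw [iotaTau, iotaTau, hx, hz]
  exact ((((commute_C_mul_T (hac.neg_left.neg_right) _ _).add_right
      (commute_C_mul_T (hc1.neg_left) _ _)).add_right
      (commute_C_mul_T (haz.neg_left) _ _)).add_left
    (((commute_C_mul_T (h1c.neg_right) _ _).add_right
      (commute_C_mul_T h11 _ _)).add_right
      (commute_C_mul_T h1z _ _))).add_left
    (((commute_C_mul_T (hxc.neg_right) _ _).add_right
      (commute_C_mul_T hx1 _ _)).add_right
      (commute_C_mul_T hxz _ _))

lemma map_altProd {A' : Type*} [Ring A'] (f : A →+* A') (a b : A) (n : ℕ) :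
    f (altProd a b n) = altProd (f a) (f b) n := by
  induction n generalizing a b with
  | zero => simp [altProd]
  | succ n ih => rw [altProd, altProd, map_mul, ih]

lemma map_braidComm {A' : Type*} [Ring A'] (f : A →+* A') (m : ℕ) (a b : A) :
    f (braidComm m a b) = braidComm m (f a) (f b) := by
  rw [braidComm, braidComm, map_sub, map_altProd, map_altProd]

lemma braidComm_two_of_commute {a b : A} (h : Commute a b) : braidComm 2 a b = 0 := by
  show a * (b * (1:A)) - b * (a * 1) = 0
  rw [mul_one, mul_one, h.eq, sub_self]

lemma laurentMap_iotaTau {A' : Type*} [Ring A'] (f : A →+* A') (a x : A) :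
    laurentMap f (iotaTau a x) = iotaTau (f a) (f x) := by
  rw [iotaTau, iotaTau, map_add, map_add, map_mul, map_mul, laurentMap_C, laurentMap_C,
    laurentMap_C, laurentMap_T, laurentMap_T, map_neg, map_sub, map_one]

lemma mixed_case_full {R' A' : Type*} [Ring R'] [Ring A'] (f : R' →+* A')
    (a x a' x' : R')
    (h1 : Commute (f a) (f a')) (h2 : Commute (f a) (f x')) (h3 : Commute (f x) (f a'))
    (h4 : Commute (f x) (f x')) (γ : ℤ) :
    f (lcoeff (braidComm 2 (iotaTau a x) (iotaTau a' x')) γ) = 0 := by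
  rw [← lcoeff_laurentMap, map_braidComm, laurentMap_iotaTau, laurentMap_iotaTau,
    braidComm_two_of_commute (commute_iotaTau h1 h2 h3 h4), lcoeff_zero]

end Aux5b


section Aux5c

set_option synthInstance.maxHeartbeats 1000000
set_option maxHeartbeats 1000000

variable {B B₁ B₂ : Type*}

lemma eOm_mul_self' (M : CoxeterMatrix B) (b : B) :
    eOm ℤ M b * eOm ℤ M b = eOm ℤ M b := by
  rw [eOm, ← map_mul]
  exact RingQuot.mkRingHom_rel (OmegaRel.e_idem b)

lemma eOm_mul_xOm' (M : CoxeterMatrix B) (b : B) :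
    eOm ℤ M b * xOm ℤ M b = xOm ℤ M b := by
  rw [eOm, xOm, ← map_mul]
  exact RingQuot.mkRingHom_rel (OmegaRel.ex b)

lemma xOm_mul_eOm' (M : CoxeterMatrix B) (b : B) :
    xOm ℤ M b * eOm ℤ M b = 0 := by
  rw [eOm, xOm, ← map_mul]
  have := RingQuot.mkRingHom_rel (OmegaRel.xe (k := ℤ) (M := M) b)
  rwa [map_zero] at this

lemma mk_braid_eq_zero (M : CoxeterMatrix B) {b b' : B} (h : M b b' ≠ 0) (γ : ℤ) :
    RingQuot.mkRingHom (OmegaRel ℤ M)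
      (lcoeff (braidComm (M b b') (iotaT ℤ b) (iotaT ℤ b')) γ) = 0 := by
  have := RingQuot.mkRingHom_rel (OmegaRel.braid (k := ℤ) (M := M) b b' h γ)
  rwa [map_zero] at this

/-- A shortcut instance for the ring structure of the tensor product. -/
@[reducible] noncomputable def instRingTensorOmega {M₁ : CoxeterMatrix B₁} {M₂ : CoxeterMatrix B₂} :
    Ring (Omega ℤ M₁ ⊗[ℤ] Omega ℤ M₂) :=
  { Algebra.TensorProduct.instNonUnitalRing, Algebra.TensorProduct.instNonAssocRing with }

attribute [local instance] instRingTensorOmega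

/-- A shortcut instance (the typeclass search for this otherwise fails). -/
noncomputable instance instRingLaurentTensorOmega {M₁ : CoxeterMatrix B₁}
    {M₂ : CoxeterMatrix B₂} :
    Ring (LaurentPolynomial (Omega ℤ M₁ ⊗[ℤ] Omega ℤ M₂)) :=
  @AddMonoidAlgebra.ring (Omega ℤ M₁ ⊗[ℤ] Omega ℤ M₂) ℤ
    (inferInstanceAs (Ring (Omega ℤ M₁ ⊗[ℤ] Omega ℤ M₂))) _

lemma comm_tmul (M₁ : CoxeterMatrix B₁) (M₂ : CoxeterMatrix B₂)
    (y : Omega ℤ M₁) (z : Omega ℤ M₂) :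
    Commute (y ⊗ₜ[ℤ] (1 : Omega ℤ M₂)) ((1 : Omega ℤ M₁) ⊗ₜ[ℤ] z) := by
  show _ = _
  rw [Algebra.TensorProduct.tmul_mul_tmul, Algebra.TensorProduct.tmul_mul_tmul,
    one_mul, one_mul, mul_one, mul_one]

/-- The map on generators defining `τ` on the free ring. -/
def tauGen (M₁ : CoxeterMatrix B₁) (M₂ : CoxeterMatrix B₂) :
    (B₁ ⊕ B₂) ⊕ (B₁ ⊕ B₂) → Omega ℤ M₁ ⊗[ℤ] Omega ℤ M₂
  | .inl (.inl b) => eOm ℤ M₁ b ⊗ₜ[ℤ] 1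
  | .inl (.inr b) => (1 : Omega ℤ M₁) ⊗ₜ[ℤ] eOm ℤ M₂ b
  | .inr (.inl b) => xOm ℤ M₁ b ⊗ₜ[ℤ] 1
  | .inr (.inr b) => (1 : Omega ℤ M₁) ⊗ₜ[ℤ] xOm ℤ M₂ b

/-- The lift of `tauGen` to the free ring. -/
def tauFree (M₁ : CoxeterMatrix B₁) (M₂ : CoxeterMatrix B₂) :
    FreeGen ℤ (B₁ ⊕ B₂) →+* Omega ℤ M₁ ⊗[ℤ] Omega ℤ M₂ :=
  (FreeAlgebra.lift ℤ (tauGen M₁ M₂)).toRingHom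

variable (M₁ : CoxeterMatrix B₁) (M₂ : CoxeterMatrix B₂)

lemma tauFree_eGen_inl (b : B₁) :
    tauFree M₁ M₂ (eGen ℤ (Sum.inl b)) = eOm ℤ M₁ b ⊗ₜ[ℤ] 1 := by
  simp [tauFree, eGen, tauGen]

lemma tauFree_eGen_inr (b : B₂) :
    tauFree M₁ M₂ (eGen ℤ (Sum.inr b)) = (1 : Omega ℤ M₁) ⊗ₜ[ℤ] eOm ℤ M₂ b := by
  simp [tauFree, eGen, tauGen]

lemma tauFree_xGen_inl (b : B₁) :
    tauFree M₁ M₂ (xGen ℤ (Sum.inl b)) = xOm ℤ M₁ b ⊗ₜ[ℤ] 1 := by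
  simp [tauFree, xGen, tauGen]

lemma tauFree_xGen_inr (b : B₂) :
    tauFree M₁ M₂ (xGen ℤ (Sum.inr b)) = (1 : Omega ℤ M₁) ⊗ₜ[ℤ] xOm ℤ M₂ b := by
  simp [tauFree, xGen, tauGen]

/-- Renaming `S₁ ↪ S`. -/
def ren1 : FreeGen ℤ B₁ →+* FreeGen ℤ (B₁ ⊕ B₂) :=
  (FreeAlgebra.lift ℤ fun s : B₁ ⊕ B₁ =>
    FreeAlgebra.ι ℤ (Sum.map Sum.inl Sum.inl s : (B₁ ⊕ B₂) ⊕ (B₁ ⊕ B₂))).toRingHom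

/-- Renaming `S₂ ↪ S`. -/
def ren2 : FreeGen ℤ B₂ →+* FreeGen ℤ (B₁ ⊕ B₂) :=
  (FreeAlgebra.lift ℤ fun s : B₂ ⊕ B₂ =>
    FreeAlgebra.ι ℤ (Sum.map Sum.inr Sum.inr s : (B₁ ⊕ B₂) ⊕ (B₁ ⊕ B₂))).toRingHom

lemma ren1_eGen (b : B₁) :
    (ren1 (B₂ := B₂)) (eGen ℤ b) = eGen ℤ (Sum.inl b) := by simp [ren1, eGen]

lemma ren1_xGen (b : B₁) :
    (ren1 (B₂ := B₂)) (xGen ℤ b) = xGen ℤ (Sum.inl b) := by simp [ren1, xGen]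

lemma ren2_eGen (b : B₂) :
    (ren2 (B₁ := B₁)) (eGen ℤ b) = eGen ℤ (Sum.inr b) := by simp [ren2, eGen]

lemma ren2_xGen (b : B₂) :
    (ren2 (B₁ := B₁)) (xGen ℤ b) = xGen ℤ (Sum.inr b) := by simp [ren2, xGen]

lemma tauFree_ren1 (p : FreeGen ℤ B₁) :
    tauFree M₁ M₂ (ren1 p) = (RingQuot.mkRingHom (OmegaRel ℤ M₁) p) ⊗ₜ[ℤ] 1 := by
  have h : ((tauFree M₁ M₂).comp ren1).toIntAlgHom =
      ((Algebra.TensorProduct.includeLeftRingHom (R := ℤ) (A := Omega ℤ M₁)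
        (B := Omega ℤ M₂)).comp (RingQuot.mkRingHom (OmegaRel ℤ M₁))).toIntAlgHom := by
    apply FreeAlgebra.hom_ext
    funext s
    rcases s with b | b <;>
      · show tauFree M₁ M₂ (ren1 (FreeAlgebra.ι ℤ _)) = _
        simp [ren1, tauFree, tauGen, Algebra.TensorProduct.includeLeftRingHom_apply,
          eOm, xOm, eGen, xGen]
        rfl
  have := DFunLike.congr_fun h p
  exact this

lemma tauFree_ren2 (p : FreeGen ℤ B₂) :
    tauFree M₁ M₂ (ren2 p) = (1 : Omega ℤ M₁) ⊗ₜ[ℤ] (RingQuot.mkRingHom (OmegaRel ℤ M₂) p) := by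
  have h : ((tauFree M₁ M₂).comp ren2).toIntAlgHom =
      ((Algebra.TensorProduct.includeRight (R := ℤ) (A := Omega ℤ M₁)
        (B := Omega ℤ M₂)).toRingHom.comp (RingQuot.mkRingHom (OmegaRel ℤ M₂))).toIntAlgHom := by
    apply FreeAlgebra.hom_ext
    funext s
    rcases s with b | b <;>
      · show tauFree M₁ M₂ (ren2 (FreeAlgebra.ι ℤ _)) = _
        simp [ren2, tauFree, tauGen, eOm, xOm, eGen, xGen]
        rfl
  have := DFunLike.congr_fun h p
  exact this

lemma tauFree_rel : ∀ ⦃x y⦄, OmegaRel ℤ (prodMatrix M₁ M₂) x y →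
    tauFree M₁ M₂ x = tauFree M₁ M₂ y := by
  intro x y h
  induction h with
  | e_idem b =>
      rcases b with b | b <;>
        simp [map_mul, tauFree_eGen_inl, tauFree_eGen_inr,
          Algebra.TensorProduct.tmul_mul_tmul, eOm_mul_self', mul_one, one_mul]
  | e_comm b b' =>
      rcases b with b | b <;> rcases b' with b' | b' <;>
        simp only [map_mul, tauFree_eGen_inl, tauFree_eGen_inr,
          Algebra.TensorProduct.tmul_mul_tmul, mul_one, one_mul]
      · rw [(commute_eOm ℤ M₁ b b').eq]
      · rw [(commute_eOm ℤ M₂ b b').eq]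
  | ex b =>
      rcases b with b | b <;>
        simp [map_mul, tauFree_eGen_inl, tauFree_eGen_inr, tauFree_xGen_inl,
          tauFree_xGen_inr, Algebra.TensorProduct.tmul_mul_tmul, eOm_mul_xOm']
  | xe b =>
      rcases b with b | b <;>
        simp [map_mul, tauFree_eGen_inl, tauFree_eGen_inr, tauFree_xGen_inl,
          tauFree_xGen_inr, Algebra.TensorProduct.tmul_mul_tmul, xOm_mul_eOm']
  | braid b b' h γ =>
      rw [map_zero]
      rcases b with b | b <;> rcases b' with b' | b'
      · -- both in B₁
        have hM : prodMatrix M₁ M₂ (Sum.inl b) (Sum.inl b') = M₁ b b' := rfl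
        have key : iotaT ℤ (Sum.inl b : B₁ ⊕ B₂) = laurentMap ren1 (iotaT ℤ b) := by
          rw [iotaT_eq_iotaTau ℤ (Sum.inl b : B₁ ⊕ B₂), iotaT_eq_iotaTau ℤ b,
            laurentMap_iotaTau, ren1_eGen, ren1_xGen]
        have key' : iotaT ℤ (Sum.inl b' : B₁ ⊕ B₂) = laurentMap ren1 (iotaT ℤ b') := by
          rw [iotaT_eq_iotaTau ℤ (Sum.inl b' : B₁ ⊕ B₂), iotaT_eq_iotaTau ℤ b',
            laurentMap_iotaTau, ren1_eGen, ren1_xGen]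
        rw [hM, key, key', ← map_braidComm, lcoeff_laurentMap, tauFree_ren1,
          mk_braid_eq_zero M₁ h γ, TensorProduct.zero_tmul]
      · -- mixed
        have hM : prodMatrix M₁ M₂ (Sum.inl b) (Sum.inr b') = 2 := rfl
        rw [hM]
        have h1 := comm_tmul M₁ M₂ (eOm ℤ M₁ b) (eOm ℤ M₂ b')
        have h2 := comm_tmul M₁ M₂ (eOm ℤ M₁ b) (xOm ℤ M₂ b')
        have h3 := comm_tmul M₁ M₂ (xOm ℤ M₁ b) (eOm ℤ M₂ b')
        have h4 := comm_tmul M₁ M₂ (xOm ℤ M₁ b) (xOm ℤ M₂ b')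
        rw [← tauFree_eGen_inl M₁ M₂ b, ← tauFree_eGen_inr M₁ M₂ b'] at h1
        rw [← tauFree_eGen_inl M₁ M₂ b, ← tauFree_xGen_inr M₁ M₂ b'] at h2
        rw [← tauFree_xGen_inl M₁ M₂ b, ← tauFree_eGen_inr M₁ M₂ b'] at h3
        rw [← tauFree_xGen_inl M₁ M₂ b, ← tauFree_xGen_inr M₁ M₂ b'] at h4
        exact mixed_case_full (tauFree M₁ M₂) _ _ _ _ h1 h2 h3 h4 γ
      · -- mixed, other order
        have hM : prodMatrix M₁ M₂ (Sum.inr b) (Sum.inl b') = 2 := rfl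
        rw [hM]
        have h1 := (comm_tmul M₁ M₂ (eOm ℤ M₁ b') (eOm ℤ M₂ b)).symm
        have h2 := (comm_tmul M₁ M₂ (xOm ℤ M₁ b') (eOm ℤ M₂ b)).symm
        have h3 := (comm_tmul M₁ M₂ (eOm ℤ M₁ b') (xOm ℤ M₂ b)).symm
        have h4 := (comm_tmul M₁ M₂ (xOm ℤ M₁ b') (xOm ℤ M₂ b)).symm
        rw [← tauFree_eGen_inr M₁ M₂ b, ← tauFree_eGen_inl M₁ M₂ b'] at h1
        rw [← tauFree_eGen_inr M₁ M₂ b, ← tauFree_xGen_inl M₁ M₂ b'] at h2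
        rw [← tauFree_xGen_inr M₁ M₂ b, ← tauFree_eGen_inl M₁ M₂ b'] at h3
        rw [← tauFree_xGen_inr M₁ M₂ b, ← tauFree_xGen_inl M₁ M₂ b'] at h4
        exact mixed_case_full (tauFree M₁ M₂) _ _ _ _ h1 h2 h3 h4 γ
      · -- both in B₂
        have hM : prodMatrix M₁ M₂ (Sum.inr b) (Sum.inr b') = M₂ b b' := rfl
        have key : iotaT ℤ (Sum.inr b : B₁ ⊕ B₂) = laurentMap ren2 (iotaT ℤ b) := by
          rw [iotaT_eq_iotaTau ℤ (Sum.inr b : B₁ ⊕ B₂), iotaT_eq_iotaTau ℤ b,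
            laurentMap_iotaTau, ren2_eGen, ren2_xGen]
        have key' : iotaT ℤ (Sum.inr b' : B₁ ⊕ B₂) = laurentMap ren2 (iotaT ℤ b') := by
          rw [iotaT_eq_iotaTau ℤ (Sum.inr b' : B₁ ⊕ B₂), iotaT_eq_iotaTau ℤ b',
            laurentMap_iotaTau, ren2_eGen, ren2_xGen]
        rw [hM, key, key', ← map_braidComm, lcoeff_laurentMap, tauFree_ren2,
          mk_braid_eq_zero M₂ h γ, TensorProduct.tmul_zero]

end Aux5c


/-- let `W = W₁ × W₂` be a finite Coxeter group with `S = S₁ ⊔ S₂`.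
There is a unique ring homomorphism `τ : Ω(W,S) → Ω(W₁,S₁) ⊗_ℤ Ω(W₂,S₂)` with
`τ(e_s) = e_s ⊗ 1`, `τ(x_s) = x_s ⊗ 1` for `s ∈ S₁` and `τ(e_s) = 1 ⊗ e_s`,
`τ(x_s) = 1 ⊗ x_s` for `s ∈ S₂`. -/
theorem statement5 {B₁ B₂ : Type*} [Fintype B₁] [DecidableEq B₁] [Fintype B₂]
    [DecidableEq B₂] (M₁ : CoxeterMatrix B₁) (M₂ : CoxeterMatrix B₂)
    {W₁ W₂ : Type*} [Group W₁] [Group W₂] [Finite W₁] [Finite W₂]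
    (cs₁ : CoxeterSystem M₁ W₁) (cs₂ : CoxeterSystem M₂ W₂)
    (cs : CoxeterSystem (prodMatrix M₁ M₂) (W₁ × W₂)) :
    ∃! t : Omega ℤ (prodMatrix M₁ M₂) →+* Omega ℤ M₁ ⊗[ℤ] Omega ℤ M₂,
      TauCond ℤ M₁ M₂ ⇑t := by
  letI : Ring (Omega ℤ M₁ ⊗[ℤ] Omega ℤ M₂) := instRingTensorOmega
  refine ⟨RingQuot.lift ⟨tauFree M₁ M₂, tauFree_rel M₁ M₂⟩, ⟨?_, ?_⟩, ?_⟩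
  · intro b
    constructor
    · rw [eOm, RingQuot.lift_mkRingHom_apply]
      exact tauFree_eGen_inl M₁ M₂ b
    · rw [xOm, RingQuot.lift_mkRingHom_apply]
      exact tauFree_xGen_inl M₁ M₂ b
  · intro b
    constructor
    · rw [eOm, RingQuot.lift_mkRingHom_apply]
      exact tauFree_eGen_inr M₁ M₂ b
    · rw [xOm, RingQuot.lift_mkRingHom_apply]
      exact tauFree_xGen_inr M₁ M₂ b
  · intro t' ht'
    apply RingQuot.ringQuot_ext t' (RingQuot.lift ⟨tauFree M₁ M₂, tauFree_rel M₁ M₂⟩)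
    have h : (t'.comp (RingQuot.mkRingHom (OmegaRel ℤ (prodMatrix M₁ M₂)))).toIntAlgHom
        = ((RingQuot.lift ⟨tauFree M₁ M₂, tauFree_rel M₁ M₂⟩).comp
            (RingQuot.mkRingHom (OmegaRel ℤ (prodMatrix M₁ M₂)))).toIntAlgHom := by
      apply FreeAlgebra.hom_ext
      funext s
      show t' (RingQuot.mkRingHom _ (FreeAlgebra.ι ℤ s))
        = RingQuot.lift ⟨tauFree M₁ M₂, tauFree_rel M₁ M₂⟩
            (RingQuot.mkRingHom _ (FreeAlgebra.ι ℤ s))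
      rw [RingQuot.lift_mkRingHom_apply]
      rcases s with (b | b) | (b | b)
      · show t' (eOm ℤ (prodMatrix M₁ M₂) (Sum.inl b)) = tauFree M₁ M₂ (eGen ℤ (Sum.inl b))
        rw [(ht'.1 b).1, tauFree_eGen_inl]
        rfl
      · show t' (eOm ℤ (prodMatrix M₁ M₂) (Sum.inr b)) = tauFree M₁ M₂ (eGen ℤ (Sum.inr b))
        rw [(ht'.2 b).1, tauFree_eGen_inr]
        rfl
      · show t' (xOm ℤ (prodMatrix M₁ M₂) (Sum.inl b)) = tauFree M₁ M₂ (xGen ℤ (Sum.inl b))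
        rw [(ht'.1 b).2, tauFree_xGen_inl]
        rfl
      · show t' (xOm ℤ (prodMatrix M₁ M₂) (Sum.inr b)) = tauFree M₁ M₂ (xGen ℤ (Sum.inr b))
        rw [(ht'.2 b).2, tauFree_xGen_inr]
        rfl
    exact RingHom.ext fun x => DFunLike.congr_fun h x

end WGraphPaper

end
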